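/- Let A₁,…,A_j be left-orthonormal cores (A_k^L has orthonormal columns, R_0 = 1) and let p(s_1,…,s_j) = (1/R_j)·‖A_{≤j}[(s_1,…,s_j),:]‖² be the normalized squared-row-norm distribution on index tuples. Then for any 1 ≤ k ≤ j and fixed s_{k+1},…,s_j, the marginal probability Σ_{s_1,…,s_{k-1}} p(s_1,…,s_j) equals (1/R_j)·Tr[H_{>k}ᵀ · A_k[:,s_k,:]ᵀ · A_k[:,s_k,:] · H_{>k}], where H_{>k} = A_{k+1}[:,s_{k+1},:]·…·A_j[:,s_j,:]. -/
import Mathlib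


open Matrix

variable (R I : ℕ → ℕ)

/-- The `i`-th lateral ttSlice `A_k[:, i, :]` of the `k`-th TT-core. -/
def ttSlice (𝒜 : (k : ℕ) → Fin (R k) → Fin (I k) → Fin (R (k + 1)) → ℝ)
    (k : ℕ) (i : Fin (I k)) : Matrix (Fin (R k)) (Fin (R (k + 1))) ℝ :=
  fun a b => 𝒜 k a i b

/-- Entry of the chain matricization `A_{≤j}`:
`A_{≤j}[(i_1,…,i_j), r_j] = Σ_{r_0,…,r_{j-1}} ∏_{k=1}^j A_k(r_{k-1}, i_k, r_k)`. -/
def chainEntry (𝒜 : (k : ℕ) → Fin (R k) → Fin (I k) → Fin (R (k + 1)) → ℝ)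
    (j : ℕ) (s : ∀ k : Fin j, Fin (I k)) (rj : Fin (R j)) : ℝ :=
  ∑ p : ∀ k : Fin j, Fin (R k), ∏ k : Fin j,
    𝒜 k (p k) (s k)
      (if h : (k : ℕ) + 1 < j then p ⟨k + 1, h⟩
       else Fin.cast (congrArg R (by have := k.isLt; omega)) rj)

/-- Product of lateral slices `A₁[:,s₁,:] ⋯ A_j[:,s_j,:]`. -/
def sliceProd (𝒜 : (k : ℕ) → Fin (R k) → Fin (I k) → Fin (R (k + 1)) → ℝ) :
    (j : ℕ) → (∀ k : Fin j, Fin (I k)) → Matrix (Fin (R 0)) (Fin (R j)) ℝ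
  | 0, _ => 1
  | n + 1, s =>
      sliceProd 𝒜 n (fun k => s ⟨k.1, Nat.lt_succ_of_lt k.2⟩) *
        ttSlice R I 𝒜 n (s ⟨n, Nat.lt_succ_self n⟩)

/-- Product of lateral slices from position `a` (inclusive), `d` slices long:
`A_{a+1}[:,s_{a+1},:] ⋯ A_{a+d}[:,s_{a+d},:]`. -/
def prodFrom (𝒜 : (k : ℕ) → Fin (R k) → Fin (I k) → Fin (R (k + 1)) → ℝ)
    (j : ℕ) (s : ∀ k : Fin j, Fin (I k)) (a : ℕ) :
    (d : ℕ) → a + d ≤ j → Matrix (Fin (R a)) (Fin (R (a + d))) ℝ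
  | 0, _ => (1 : Matrix (Fin (R a)) (Fin (R a)) ℝ)
  | d + 1, h =>
      prodFrom 𝒜 j s a d (by omega) * ttSlice R I 𝒜 (a + d) (s ⟨a + d, by omega⟩)

section Aux

lemma snoc_mk_lt' (f : ℕ → ℕ) {n : ℕ} (q : ∀ i : Fin n, Fin (f i)) (x : Fin (f n)) (m : ℕ)
    (h' : m < n) (h : m < n + 1) :
    Fin.snoc (α := fun i : Fin (n+1) => Fin (f i)) q x ⟨m, h⟩ = q ⟨m, h'⟩ :=
  Fin.snoc_castSucc (α := fun i : Fin (n+1) => Fin (f i)) (p := q) (x := x) (i := ⟨m, h'⟩)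

lemma snoc_mk_last' (f : ℕ → ℕ) {n : ℕ} (q : ∀ i : Fin n, Fin (f i)) (x : Fin (f n)) (m : ℕ)
    (h' : m = n) (h : m < n + 1) :
    Fin.snoc (α := fun i : Fin (n+1) => Fin (f i)) q x ⟨m, h⟩ =
      Fin.cast (congrArg f h'.symm) x := by
  subst h'
  exact Fin.snoc_last (α := fun i : Fin (m+1) => Fin (f i)) (p := q) (x := x)


end Aux

lemma chainEntry_eq_sliceProd (𝒜 : (k : ℕ) → Fin (R k) → Fin (I k) → Fin (R (k + 1)) → ℝ) :
    ∀ (n : ℕ) (s : ∀ k : Fin n, Fin (I k)) (r : Fin (R n)),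
      chainEntry R I 𝒜 n s r = ∑ r0 : Fin (R 0), sliceProd R I 𝒜 n s r0 r
  | 0, s, r => by
      simp [chainEntry, sliceProd, Matrix.one_apply]
  | n + 1, s, r => by
      unfold chainEntry
      rw [← Equiv.sum_comp (Fin.snocEquiv (fun k : Fin (n+1) => Fin (R k)))]
      rw [Fintype.sum_prod_type]
      have key : ∀ (x : Fin (R n)) (q : ∀ i : Fin n, Fin (R i.castSucc)),
          (∏ k : Fin (n+1),
            𝒜 k (Fin.snocEquiv (fun k : Fin (n+1) => Fin (R k)) (x, q) k) (s k)
              (if h : (k : ℕ) + 1 < n + 1 then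
                  Fin.snocEquiv (fun k : Fin (n+1) => Fin (R k)) (x, q) ⟨(k : ℕ) + 1, h⟩
               else Fin.cast (congrArg R (by have := k.isLt; omega)) r)) =
          (∏ k : Fin n, 𝒜 k (q k) (s k.castSucc)
              (if h : (k : ℕ) + 1 < n then q ⟨(k : ℕ) + 1, h⟩
               else Fin.cast (congrArg R (by have := k.isLt; omega)) x)) *
          𝒜 n x (s (Fin.last n)) r := by
        intro x q
        rw [Fin.prod_univ_castSucc]
        congr 1
        · refine Finset.prod_congr rfl fun k _ => ?_
          simp only [Fin.snocEquiv, Equiv.coe_fn_mk, Fin.coe_castSucc]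
          rw [dif_pos (Nat.succ_lt_succ k.isLt)]
          rw [Fin.snoc_castSucc]
          by_cases h' : (k : ℕ) + 1 < n
          · rw [dif_pos h', snoc_mk_lt' R q x ((k : ℕ) + 1) h']
          · rw [dif_neg h', snoc_mk_last' R q x ((k : ℕ) + 1) (by have := k.isLt; omega)]
        · simp only [Fin.snocEquiv, Equiv.coe_fn_mk, Fin.val_last]
          rw [dif_neg (by omega)]
          rw [Fin.snoc_last]
          rfl
      simp only [key]
      simp only [Fin.val_last]
      trans ∑ x : Fin (R n), (∑ r0 : Fin (R 0),
          sliceProd R I 𝒜 n (fun k => s k.castSucc) r0 x) * 𝒜 n x (s (Fin.last n)) r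
      · refine Finset.sum_congr rfl fun x _ => ?_
        rw [← Finset.sum_mul]
        exact congrArg (fun z => z * 𝒜 n x (s (Fin.last n)) r)
          (chainEntry_eq_sliceProd 𝒜 n (fun k => s k.castSucc) x)
      · simp only [Finset.sum_mul]
        rw [Finset.sum_comm]
        refine Finset.sum_congr rfl fun r0 _ => ?_
        simp only [sliceProd, Matrix.mul_apply]
        rfl

lemma sliceProd_split (𝒜 : (k : ℕ) → Fin (R k) → Fin (I k) → Fin (R (k + 1)) → ℝ)
    (j : ℕ) (s : ∀ k : Fin j, Fin (I k)) (a : ℕ) :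
    ∀ (d : ℕ) (h : a + d ≤ j),
      sliceProd R I 𝒜 (a + d) (fun k => s ⟨k.1, by omega⟩) =
      sliceProd R I 𝒜 a (fun k => s ⟨k.1, by omega⟩) * prodFrom R I 𝒜 j s a d h
  | 0, h => by rw [prodFrom, Matrix.mul_one]; rfl
  | d + 1, h => by
      rw [prodFrom, ← Matrix.mul_assoc, ← sliceProd_split 𝒜 j s a d (by omega)]
      rfl

lemma prodFrom_congr (𝒜 : (k : ℕ) → Fin (R k) → Fin (I k) → Fin (R (k + 1)) → ℝ)
    (j : ℕ) (s t : ∀ k : Fin j, Fin (I k)) (a : ℕ)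
    (hst : ∀ m : Fin j, a ≤ (m : ℕ) → s m = t m) :
    ∀ (d : ℕ) (h : a + d ≤ j), prodFrom R I 𝒜 j s a d h = prodFrom R I 𝒜 j t a d h
  | 0, h => rfl
  | d + 1, h => by
      rw [prodFrom, prodFrom, prodFrom_congr 𝒜 j s t a hst d (by omega),
        hst ⟨a + d, by omega⟩ (by simp)]

lemma ortho_sum (𝒜 : (k : ℕ) → Fin (R k) → Fin (I k) → Fin (R (k + 1)) → ℝ)
    (j : ℕ)
    (hortho : ∀ k, k < j →
      ∑ i : Fin (I k), (ttSlice R I 𝒜 k i)ᵀ * ttSlice R I 𝒜 k i = 1) :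
    ∀ (κ : ℕ), κ ≤ j →
      ∑ u : ∀ m : Fin κ, Fin (I m),
        (sliceProd R I 𝒜 κ u)ᵀ * sliceProd R I 𝒜 κ u = 1
  | 0, _ => by
      simp [sliceProd]
  | n + 1, hn => by
      rw [← Equiv.sum_comp (Fin.snocEquiv (fun m : Fin (n+1) => Fin (I m)))]
      rw [Fintype.sum_prod_type]
      have key : ∀ (x : Fin (I n)) (q : ∀ m : Fin n, Fin (I m.castSucc)),
          (sliceProd R I 𝒜 (n+1) (Fin.snocEquiv (fun m : Fin (n+1) => Fin (I m)) (x, q)))ᵀ *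
            sliceProd R I 𝒜 (n+1) (Fin.snocEquiv (fun m : Fin (n+1) => Fin (I m)) (x, q)) =
          (ttSlice R I 𝒜 n x)ᵀ *
            ((sliceProd R I 𝒜 n q)ᵀ * sliceProd R I 𝒜 n q) * ttSlice R I 𝒜 n x := by
        intro x q
        have h1 : sliceProd R I 𝒜 (n+1) (Fin.snocEquiv (fun m : Fin (n+1) => Fin (I m)) (x, q)) =
            sliceProd R I 𝒜 n q * ttSlice R I 𝒜 n x := by
          have h2 : (fun k : Fin n =>
              Fin.snocEquiv (fun m : Fin (n+1) => Fin (I m)) (x, q) ⟨k.1, Nat.lt_succ_of_lt k.2⟩) = q := by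
            funext k
            exact snoc_mk_lt' I q x k.1 k.2 _
          have h3 : Fin.snocEquiv (fun m : Fin (n+1) => Fin (I m)) (x, q) ⟨n, Nat.lt_succ_self n⟩ = x :=
            Fin.snoc_last (α := fun m : Fin (n+1) => Fin (I m)) (p := q) (x := x)
          show sliceProd R I 𝒜 n _ * ttSlice R I 𝒜 n _ = _
          rw [h2, h3]
        rw [h1]
        simp [Matrix.transpose_mul, Matrix.mul_assoc]
      simp only [key]
      have inner : ∀ x : Fin (I n),
          (∑ q : ∀ m : Fin n, Fin (I m.castSucc),
            (ttSlice R I 𝒜 n x)ᵀ * ((sliceProd R I 𝒜 n q)ᵀ * sliceProd R I 𝒜 n q) *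
              ttSlice R I 𝒜 n x) =
          (ttSlice R I 𝒜 n x)ᵀ * ttSlice R I 𝒜 n x := by
        intro x
        rw [← Matrix.sum_mul, ← Matrix.mul_sum]
        have conv : (∑ q : ∀ m : Fin n, Fin (I m.castSucc),
            (sliceProd R I 𝒜 n q)ᵀ * sliceProd R I 𝒜 n q) = 1 :=
          ortho_sum 𝒜 j hortho n (by omega)
        rw [conv, Matrix.mul_one]
      simp only [inner]
      exact hortho n (by omega)

/-- **Conditional (marginal) distribution for the chain.** Let
`p(s_1,…,s_j) = ‖A_{≤j}[(s_1,…,s_j),:]‖² / R_j` be the normalized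
squared-row-norm distribution. For a fixed position `κ` (0-based, the paper's
`k = κ+1`) and fixed `s_{κ+1},…,s_j` (given by `t`), the marginal over
`s_1,…,s_κ` equals `(1/R_j)·Tr[H_{>k}ᵀ Aₖ[:,s_k,:]ᵀ Aₖ[:,s_k,:] H_{>k}]`,
where `H_{>k} = A_{κ+2}[:,s_{κ+2},:] ⋯ A_j[:,s_j,:]` (identity when `κ+1 = j`). -/
theorem chain_marginal_distribution
    (𝒜 : (k : ℕ) → Fin (R k) → Fin (I k) → Fin (R (k + 1)) → ℝ)
    (j : ℕ) (hR0 : R 0 = 1)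
    (hortho : ∀ k, k < j →
      ∑ i : Fin (I k), (ttSlice R I 𝒜 k i)ᵀ * ttSlice R I 𝒜 k i = 1)
    (κ : ℕ) (hκ : κ < j) (t : ∀ m : Fin j, Fin (I m)) :
    ∑ u : ∀ m : Fin κ, Fin (I m),
        (R j : ℝ)⁻¹ *
          ∑ r : Fin (R j),
            chainEntry R I 𝒜 j
              (fun m => if h : (m : ℕ) < κ then u ⟨m.1, h⟩ else t m) r ^ 2 =
      (R j : ℝ)⁻¹ *
        Matrix.trace
          ((prodFrom R I 𝒜 j t (κ + 1) (j - (κ + 1)) (by omega))ᵀ *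
            (ttSlice R I 𝒜 κ (t ⟨κ, hκ⟩))ᵀ *
            ttSlice R I 𝒜 κ (t ⟨κ, hκ⟩) *
            prodFrom R I 𝒜 j t (κ + 1) (j - (κ + 1)) (by omega)) := by
  obtain ⟨d, rfl⟩ : ∃ d, j = κ + 1 + d := ⟨j - (κ + 1), by omega⟩
  have hdd : κ + 1 + d - (κ + 1) = d := by omega
  have goal_congr : ∀ (d' : ℕ) (hdd' : d' = d) (h1 : κ + 1 + d' ≤ κ + 1 + d)
      (h2 : κ + 1 + d ≤ κ + 1 + d),
      Matrix.trace
        ((prodFrom R I 𝒜 (κ+1+d) t (κ+1) d' h1)ᵀ *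
          (ttSlice R I 𝒜 κ (t ⟨κ, hκ⟩))ᵀ *
          ttSlice R I 𝒜 κ (t ⟨κ, hκ⟩) *
          prodFrom R I 𝒜 (κ+1+d) t (κ+1) d' h1) =
      Matrix.trace
        ((prodFrom R I 𝒜 (κ+1+d) t (κ+1) d h2)ᵀ *
          (ttSlice R I 𝒜 κ (t ⟨κ, hκ⟩))ᵀ *
          ttSlice R I 𝒜 κ (t ⟨κ, hκ⟩) *
          prodFrom R I 𝒜 (κ+1+d) t (κ+1) d h2) := by
    intro d' hdd' h1 h2
    subst hdd'
    rfl
  rw [goal_congr (κ + 1 + d - (κ + 1)) hdd (by omega) (by omega)]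
  haveI hUinst : Unique (Fin (R 0)) :=
    ⟨⟨⟨0, by omega⟩⟩, fun b => Fin.ext (by have := b.isLt; omega)⟩
  have hU : ∀ (g : Fin (R 0) → ℝ), (∑ r0 : Fin (R 0), g r0) = g ⟨0, by omega⟩ := by
    intro g
    rw [show (⟨0, by omega⟩ : Fin (R 0)) = default from Subsingleton.elim _ _]
    exact Fintype.sum_unique g
  have hTr : ∀ (M : Matrix (Fin (R 0)) (Fin (R (κ+1+d))) ℝ),
      (∑ r : Fin (R (κ+1+d)), (M ⟨0, by omega⟩ r) ^ 2) = Matrix.trace (Mᵀ * M) := by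
    intro M
    rw [Matrix.trace]
    simp only [Matrix.diag_apply, Matrix.mul_apply, Matrix.transpose_apply]
    refine Finset.sum_congr rfl fun r _ => ?_
    rw [hU (fun r0 => M r0 r * M r0 r)]
    ring
  have key : ∀ u : ∀ m : Fin κ, Fin (I m),
      (∑ r : Fin (R (κ+1+d)),
        chainEntry R I 𝒜 (κ+1+d) (fun m => if h : (m : ℕ) < κ then u ⟨m.1, h⟩ else t m) r ^ 2) =
      Matrix.trace
        ((sliceProd R I 𝒜 κ u * ttSlice R I 𝒜 κ (t ⟨κ, hκ⟩) *
            prodFrom R I 𝒜 (κ+1+d) t (κ+1) d (by omega))ᵀ *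
          (sliceProd R I 𝒜 κ u * ttSlice R I 𝒜 κ (t ⟨κ, hκ⟩) *
            prodFrom R I 𝒜 (κ+1+d) t (κ+1) d (by omega))) := by
    intro u
    set su : ∀ m : Fin (κ+1+d), Fin (I m) :=
      (fun m => if h : (m : ℕ) < κ then u ⟨m.1, h⟩ else t m) with hsu
    have hM : sliceProd R I 𝒜 (κ+1+d) su =
        sliceProd R I 𝒜 κ u * ttSlice R I 𝒜 κ (t ⟨κ, hκ⟩) *
          prodFrom R I 𝒜 (κ+1+d) t (κ+1) d (by omega) := by
      have h1 : sliceProd R I 𝒜 (κ+1+d) su =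
          sliceProd R I 𝒜 (κ+1) (fun k => su ⟨k.1, by omega⟩) *
            prodFrom R I 𝒜 (κ+1+d) su (κ+1) d (by omega) :=
        sliceProd_split R I 𝒜 (κ+1+d) su (κ+1) d (by omega)
      have h2 : prodFrom R I 𝒜 (κ+1+d) su (κ+1) d (by omega) =
          prodFrom R I 𝒜 (κ+1+d) t (κ+1) d (by omega) := by
        refine prodFrom_congr R I 𝒜 (κ+1+d) su t (κ+1) (fun m hm => ?_) d (by omega)
        rw [hsu]
        exact dif_neg (by omega)
      have h3 : sliceProd R I 𝒜 (κ+1) (fun k => su ⟨k.1, by omega⟩) =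
          sliceProd R I 𝒜 κ u * ttSlice R I 𝒜 κ (t ⟨κ, hκ⟩) := by
        show sliceProd R I 𝒜 κ _ * ttSlice R I 𝒜 κ _ = _
        have h4 : (fun k : Fin κ => su ⟨k.1, by omega⟩) = u := by
          funext k
          simp only [hsu]
          rw [dif_pos k.2]
        have h5 : su ⟨κ, by omega⟩ = t ⟨κ, hκ⟩ := by
          simp only [hsu]
          rw [dif_neg (lt_irrefl κ)]
        rw [show (fun k : Fin κ =>
            (fun k : Fin (κ+1) => su ⟨k.1, by omega⟩) ⟨k.1, Nat.lt_succ_of_lt k.2⟩) = u from h4]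
        rw [show (fun k : Fin (κ+1) => su ⟨k.1, by omega⟩) ⟨κ, Nat.lt_succ_self κ⟩ = t ⟨κ, hκ⟩ from h5]
      rw [h1, h2, h3]
    trans ∑ r : Fin (R (κ+1+d)), (sliceProd R I 𝒜 (κ+1+d) su ⟨0, by omega⟩ r) ^ 2
    · refine Finset.sum_congr rfl fun r _ => ?_
      rw [chainEntry_eq_sliceProd R I 𝒜 (κ+1+d) su r,
        hU (fun r0 => sliceProd R I 𝒜 (κ+1+d) su r0 r)]
    · rw [hTr, hM]
  simp only [key, ← Finset.mul_sum]
  congr 1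
  have step1 : ∀ u : ∀ m : Fin κ, Fin (I m),
      Matrix.trace
        ((sliceProd R I 𝒜 κ u * ttSlice R I 𝒜 κ (t ⟨κ, hκ⟩) *
            prodFrom R I 𝒜 (κ+1+d) t (κ+1) d (by omega))ᵀ *
          (sliceProd R I 𝒜 κ u * ttSlice R I 𝒜 κ (t ⟨κ, hκ⟩) *
            prodFrom R I 𝒜 (κ+1+d) t (κ+1) d (by omega))) =
      Matrix.trace
        ((ttSlice R I 𝒜 κ (t ⟨κ, hκ⟩) * prodFrom R I 𝒜 (κ+1+d) t (κ+1) d (by omega))ᵀ *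
          ((sliceProd R I 𝒜 κ u)ᵀ * sliceProd R I 𝒜 κ u) *
          (ttSlice R I 𝒜 κ (t ⟨κ, hκ⟩) * prodFrom R I 𝒜 (κ+1+d) t (κ+1) d (by omega))) := by
    intro u
    congr 1
    simp [Matrix.transpose_mul, Matrix.mul_assoc]
  simp only [step1]
  rw [← Matrix.trace_sum]
  rw [show (∑ u : ∀ m : Fin κ, Fin (I m),
      (ttSlice R I 𝒜 κ (t ⟨κ, hκ⟩) * prodFrom R I 𝒜 (κ+1+d) t (κ+1) d (by omega))ᵀ *
        ((sliceProd R I 𝒜 κ u)ᵀ * sliceProd R I 𝒜 κ u) *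
        (ttSlice R I 𝒜 κ (t ⟨κ, hκ⟩) * prodFrom R I 𝒜 (κ+1+d) t (κ+1) d (by omega))) =
      (ttSlice R I 𝒜 κ (t ⟨κ, hκ⟩) * prodFrom R I 𝒜 (κ+1+d) t (κ+1) d (by omega))ᵀ *
        (∑ u : ∀ m : Fin κ, Fin (I m), (sliceProd R I 𝒜 κ u)ᵀ * sliceProd R I 𝒜 κ u) *
        (ttSlice R I 𝒜 κ (t ⟨κ, hκ⟩) * prodFrom R I 𝒜 (κ+1+d) t (κ+1) d (by omega)) from by
    rw [Matrix.mul_sum, Matrix.sum_mul]]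
  rw [ortho_sum R I 𝒜 (κ+1+d) hortho κ (by omega), Matrix.mul_one]
  congr 1
  simp [Matrix.transpose_mul, Matrix.mul_assoc]
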